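/- arXiv:2004.08370 — 2 statements merged into one kernel-verified Lean document; each statement's English description precedes it below -/
import Mathlib

section
/- Let Γ be a graph and let α, α' be two distinct edges of Γ incident to the same pair of vertices (a double edge). Then the generalized Arnold ring R^r(Γ) is isomorphic to R^r(Γ∖α), the ring of the graph with α deleted. -/
/-- A graph with vertex type `V`, allowing multiple edges; each edge carries an
orientation, given by the ordered pair of its endpoints. -/
structure MGraph (V : Type) : Type 1 where
  E : Type
  ends : E → V × V

namespace MGraph

variable {V : Type}

/-- A graph is loopless if no edge has equal endpoints. -/
def Loopless (Γ : MGraph V) : Prop := ∀ e : Γ.E, (Γ.ends e).1 ≠ (Γ.ends e).2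

/-- A graph has no multiple edges if distinct edges have distinct (unordered) endpoint pairs. -/
def NoMultiple (Γ : MGraph V) : Prop :=
  ∀ e e' : Γ.E, (Γ.ends e = Γ.ends e' ∨ Γ.ends e = (Γ.ends e').swap) → e = e'

/-- The graph obtained by deleting the edge `α`. -/
def delete (Γ : MGraph V) (α : Γ.E) : MGraph V :=
  ⟨{e : Γ.E // e ≠ α}, fun e => Γ.ends e.1⟩

/-- The collapse map on vertices identifying the second endpoint of `α` with the first. -/
def collapse [DecidableEq V] (Γ : MGraph V) (α : Γ.E) : V → V :=
  fun v => if v = (Γ.ends α).2 then (Γ.ends α).1 else v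

/-- The graph obtained by contracting the edge `α` (keeping the ambient vertex type,
with both endpoints of `α` identified via the collapse map). -/
def contract [DecidableEq V] (Γ : MGraph V) (α : Γ.E) : MGraph V :=
  ⟨{e : Γ.E // e ≠ α}, fun e =>
    (Γ.collapse α (Γ.ends e.1).1, Γ.collapse α (Γ.ends e.1).2)⟩

/-- A circuit in a graph: a cyclic sequence of edges together with the
corresponding sequence of vertices. -/
structure Circuit (Γ : MGraph V) where
  len : ℕ
  len_pos : 0 < len
  edges : Fin len → Γ.E
  verts : Fin (len + 1) → V
  closed : verts (Fin.last len) = verts 0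
  incid : ∀ i : Fin len,
    Γ.ends (edges i) = (verts i.castSucc, verts i.succ) ∨
    Γ.ends (edges i) = (verts i.succ, verts i.castSucc)

open Classical in
/-- The sign of the `i`-th term of the Arnold class of a circuit: `(-1)^i` when `r`
is even, and the orientation sign `ε_i(w)` when `r` is odd. -/
noncomputable def Circuit.sign {Γ : MGraph V} (r : ℕ) (w : Γ.Circuit) (i : Fin w.len) : ℤ :=
  if Even r then (-1) ^ (i : ℕ)
  else if Γ.ends (w.edges i) = (w.verts i.castSucc, w.verts i.succ) then 1 else -1

/-- The defining relations of the free graded-commutative ring `Λ^r(Γ)` on one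
generator of degree `r-1` for each edge: graded commutativity (the generators commute
when `r` is odd and anticommute when `r` is even) and squares of generators vanish. -/
inductive LamRel (Γ : MGraph V) (r : ℕ) : FreeAlgebra ℤ Γ.E → FreeAlgebra ℤ Γ.E → Prop
  | comm (a b : Γ.E) : Γ.LamRel r (FreeAlgebra.ι ℤ a * FreeAlgebra.ι ℤ b)
      (((-1 : ℤ) ^ ((r - 1) * (r - 1))) • (FreeAlgebra.ι ℤ b * FreeAlgebra.ι ℤ a))
  | sq (a : Γ.E) : Γ.LamRel r (FreeAlgebra.ι ℤ a * FreeAlgebra.ι ℤ a) 0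

/-- The free graded-commutative ring `Λ^r(Γ)` over `ℤ` with one generator of degree
`r-1` for each edge of `Γ`. -/
def Lam (Γ : MGraph V) (r : ℕ) : Type := RingQuot (Γ.LamRel r)

instance (Γ : MGraph V) (r : ℕ) : Ring (Γ.Lam r) :=
  inferInstanceAs (Ring (RingQuot (Γ.LamRel r)))

/-- The generator `e_α` of `Λ^r(Γ)` corresponding to the edge `α`. -/
def gen (Γ : MGraph V) (r : ℕ) (e : Γ.E) : Γ.Lam r :=
  RingQuot.mkRingHom (Γ.LamRel r) (FreeAlgebra.ι ℤ e)

open Classical in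
/-- The Arnold class `A(w) = Σ_i ± w_1 ⋯ ŵ_i ⋯ w_{l(w)}` of a circuit `w`. -/
noncomputable def Circuit.arnold {Γ : MGraph V} (r : ℕ) (w : Γ.Circuit) : Γ.Lam r :=
  ∑ i : Fin w.len, w.sign r i •
    (((List.finRange w.len).filter (fun j => j ≠ i)).map (fun j => Γ.gen r (w.edges j))).prod

/-- The relations imposing the vanishing of all Arnold classes of circuits. -/
inductive ArnRel (Γ : MGraph V) (r : ℕ) : Γ.Lam r → Γ.Lam r → Prop
  | mk (w : Γ.Circuit) : Γ.ArnRel r (w.arnold r) 0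

/-- The generalized Arnold ring `R^r(Γ) = Λ^r(Γ)/I^r(Γ)`. -/
def R (Γ : MGraph V) (r : ℕ) : Type := RingQuot (Γ.ArnRel r)

noncomputable instance (Γ : MGraph V) (r : ℕ) : Ring (Γ.R r) :=
  inferInstanceAs (Ring (RingQuot (Γ.ArnRel r)))

/-- The quotient map `Λ^r(Γ) → R^r(Γ)`; an element of `Λ^r(Γ)` lies in the Arnold
ideal `I^r(Γ)` precisely when its image under this map is `0`. -/
noncomputable def toR (Γ : MGraph V) (r : ℕ) : Γ.Lam r →+* Γ.R r :=
  RingQuot.mkRingHom (Γ.ArnRel r)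

/-- The class of the generator `e_α` in `R^r(Γ)`. -/
noncomputable def genR (Γ : MGraph V) (r : ℕ) (e : Γ.E) : Γ.R r :=
  Γ.toR r (Γ.gen r e)

end MGraph

section DoubleEdgeAux

namespace MGraph

variable {V : Type}

lemma gen_comm (Γ : MGraph V) (r : ℕ) (a b : Γ.E) :
    Γ.gen r a * Γ.gen r b =
      ((-1 : ℤ) ^ ((r - 1) * (r - 1))) • (Γ.gen r b * Γ.gen r a) := by
  have h := RingQuot.mkRingHom_rel (LamRel.comm (Γ := Γ) (r := r) a b)
  simp [gen, map_mul, map_zsmul] at h ⊢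
  exact h

lemma gen_sq (Γ : MGraph V) (r : ℕ) (a : Γ.E) :
    Γ.gen r a * Γ.gen r a = 0 := by
  have h := RingQuot.mkRingHom_rel (LamRel.sq (Γ := Γ) (r := r) a)
  simp [gen, map_mul] at h ⊢
  exact h

/-- product of pointwise smuls -/
lemma list_prod_smul {ι : Type*} {A : Type*} [Ring A] (l : List ι) (c : ι → ℤ) (x : ι → A) :
    (l.map fun i => c i • x i).prod = (l.map c).prod • (l.map x).prod := by
  induction l with
  | nil => simp
  | cons a l ih =>
    simp only [List.map_cons, List.prod_cons, ih]
    rw [smul_mul_assoc, mul_smul_comm, smul_smul]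

lemma filt_prod_mul {n : ℕ} (i : Fin n) (f : Fin n → ℤ) :
    (((List.finRange n).filter (fun j => j ≠ i)).map f).prod * f i
      = ((List.finRange n).map f).prod := by
  classical
  have h1 : (List.finRange n).filter (fun j => j ≠ i) = (List.finRange n).erase i := by
    rw [(List.nodup_finRange n).erase_eq_filter]
    refine List.filter_congr fun x _ => ?_
    show decide (x ≠ i) = (x != i)
    rcases Bool.eq_false_or_eq_true (x != i) with h | h <;> rw [h]
    · exact decide_eq_true (bne_iff_ne.mp h)
    · refine decide_eq_false fun hx => ?_
      rw [bne_eq_false_iff_eq] at h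
      exact hx h
  rw [h1, mul_comm, List.prod_map_erase f (List.mem_finRange i)]

end MGraph

end DoubleEdgeAux

namespace MGraph

variable {V : Type}

noncomputable section

open Classical

variable (Γ : MGraph V) (r : ℕ) (α α' : Γ.E)

/-- the sign `s` relating `e_α` and `e_{α'}`. -/
def deSgn : ℤ := if Even r then 1 else if Γ.ends α' = Γ.ends α then 1 else -1

lemma deSgn_mul_self : deSgn Γ r α α' * deSgn Γ r α α' = 1 := by
  unfold deSgn; split_ifs <;> norm_num

/-- the per-edge sign. -/
def deT (e : Γ.E) : ℤ := if e = α then deSgn Γ r α α' else 1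

lemma deT_mul_self (e : Γ.E) : deT Γ r α α' e * deT Γ r α α' e = 1 := by
  unfold deT; split_ifs
  · exact deSgn_mul_self Γ r α α'
  · norm_num

/-- edge replacement map into the deleted graph. -/
def deRepl (hne : α ≠ α') (e : Γ.E) : (Γ.delete α).E :=
  if h : e = α then ⟨α', Ne.symm hne⟩ else ⟨e, h⟩

variable (hne : α ≠ α')

/-- the algebra map `FreeAlgebra → Λ(Γ∖α)`. -/
def dePhi0 : FreeAlgebra ℤ Γ.E →ₐ[ℤ] RingQuot ((Γ.delete α).LamRel r) :=
  FreeAlgebra.lift ℤ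
    (fun e => deT Γ r α α' e • (Γ.delete α).gen r (deRepl Γ α α' hne e))

lemma dePhi0_rel : ∀ ⦃x y⦄, Γ.LamRel r x y →
    (dePhi0 Γ r α α' hne).toRingHom x = (dePhi0 Γ r α α' hne).toRingHom y := by
  intro x y h
  let F : FreeAlgebra ℤ Γ.E →+* (Γ.delete α).Lam r := (dePhi0 Γ r α α' hne).toRingHom
  have hF : ∀ e, F (FreeAlgebra.ι ℤ e)
      = deT Γ r α α' e • (Γ.delete α).gen r (deRepl Γ α α' hne e) := fun e =>
    FreeAlgebra.lift_ι_apply (A := RingQuot ((Γ.delete α).LamRel r))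
      (fun e => deT Γ r α α' e • (Γ.delete α).gen r (deRepl Γ α α' hne e)) e
  show F x = F y
  induction h with
  | comm a b =>
    simp only [map_mul, map_zsmul, hF]
    rw [smul_mul_smul_comm, smul_mul_smul_comm, gen_comm (Γ.delete α) r]
    rw [smul_comm, mul_comm (Γ.deT r α α' a)]
  | sq a =>
    simp only [map_mul, hF, map_zero]
    rw [smul_mul_smul_comm, gen_sq (Γ.delete α) r, smul_zero]

/-- `Λ(Γ) → Λ(Γ∖α)`. -/
def dePhiLam : Γ.Lam r →+* (Γ.delete α).Lam r :=
  RingQuot.lift ⟨(dePhi0 Γ r α α' hne).toRingHom, dePhi0_rel Γ r α α' hne⟩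

lemma dePhiLam_gen (e : Γ.E) :
    dePhiLam Γ r α α' hne (Γ.gen r e)
      = deT Γ r α α' e • (Γ.delete α).gen r (deRepl Γ α α' hne e) := by
  show dePhiLam Γ r α α' hne (RingQuot.mkRingHom (Γ.LamRel r) (FreeAlgebra.ι ℤ e)) = _
  rw [dePhiLam]
  exact (RingQuot.lift_mkRingHom_apply (dePhi0 Γ r α α' hne).toRingHom
    (dePhi0_rel Γ r α α' hne) (FreeAlgebra.ι ℤ e)).trans
    (FreeAlgebra.lift_ι_apply (A := RingQuot ((Γ.delete α).LamRel r))
      (fun e => deT Γ r α α' e • (Γ.delete α).gen r (deRepl Γ α α' hne e)) e)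

/-- `Λ(Γ∖α) → Λ(Γ)`. -/
def dePsi0 : FreeAlgebra ℤ (Γ.delete α).E →ₐ[ℤ] RingQuot (Γ.LamRel r) :=
  FreeAlgebra.lift ℤ (fun e => Γ.gen r e.1)

lemma dePsi0_rel : ∀ ⦃x y⦄, (Γ.delete α).LamRel r x y →
    (dePsi0 Γ r α).toRingHom x = (dePsi0 Γ r α).toRingHom y := by
  intro x y h
  let G : FreeAlgebra ℤ (Γ.delete α).E →+* Γ.Lam r := (dePsi0 Γ r α).toRingHom
  have hG : ∀ e : (Γ.delete α).E, G (FreeAlgebra.ι ℤ e) = Γ.gen r e.1 := fun e =>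
    FreeAlgebra.lift_ι_apply (A := RingQuot (Γ.LamRel r))
      (fun e : (Γ.delete α).E => Γ.gen r e.1) e
  show G x = G y
  induction h with
  | comm a b =>
    simp only [map_mul, map_zsmul, hG]
    rw [gen_comm Γ r]
  | sq a =>
    simp only [map_mul, hG, map_zero]
    rw [gen_sq Γ r]

/-- `Λ(Γ∖α) → Λ(Γ)`. -/
def dePsiLam : (Γ.delete α).Lam r →+* Γ.Lam r :=
  RingQuot.lift ⟨(dePsi0 Γ r α).toRingHom, dePsi0_rel Γ r α⟩

lemma dePsiLam_gen (e : (Γ.delete α).E) :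
    dePsiLam Γ r α ((Γ.delete α).gen r e) = Γ.gen r e.1 := by
  show dePsiLam Γ r α (RingQuot.mkRingHom ((Γ.delete α).LamRel r) (FreeAlgebra.ι ℤ e)) = _
  rw [dePsiLam]
  exact (RingQuot.lift_mkRingHom_apply (dePsi0 Γ r α).toRingHom
    (dePsi0_rel Γ r α) (FreeAlgebra.ι ℤ e)).trans
    (FreeAlgebra.lift_ι_apply (A := RingQuot (Γ.LamRel r))
      (fun e : (Γ.delete α).E => Γ.gen r e.1) e)

end

end MGraph

namespace MGraph

variable {V : Type}

noncomputable section

open Classical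

variable (Γ : MGraph V) (r : ℕ) (α α' : Γ.E) (hne : α ≠ α')
  (hpar : Γ.ends α' = Γ.ends α ∨ Γ.ends α' = (Γ.ends α).swap)

lemma ends_deRepl (e : Γ.E) :
    (Γ.delete α).ends (deRepl Γ α α' hne e)
      = if e = α then Γ.ends α' else Γ.ends e := by
  by_cases h : e = α
  · rw [if_pos h, show deRepl Γ α α' hne e = ⟨α', Ne.symm hne⟩ from dif_pos h]; rfl
  · rw [if_neg h, show deRepl Γ α α' hne e = ⟨e, h⟩ from dif_neg h]; rfl

/-- replacing `α` by `α'` in a circuit yields a circuit of the deleted graph. -/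
def deCircuit (w : Γ.Circuit) : (Γ.delete α).Circuit where
  len := w.len
  len_pos := w.len_pos
  edges := fun i => deRepl Γ α α' hne (w.edges i)
  verts := w.verts
  closed := w.closed
  incid := by
    intro i
    rw [ends_deRepl]
    split_ifs with h
    · rcases hpar with hp | hp
      · rw [hp, ← h]; exact w.incid i
      · rw [hp, ← h]
        rcases w.incid i with h2 | h2 <;> rw [h2]
        · exact Or.inr rfl
        · exact Or.inl rfl
    · exact w.incid i

@[simp] lemma deCircuit_len (w : Γ.Circuit) :
    (deCircuit Γ α α' hne hpar w).len = w.len := rfl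

@[simp] lemma deCircuit_edges (w : Γ.Circuit) (i) :
    (deCircuit Γ α α' hne hpar w).edges i = deRepl Γ α α' hne (w.edges i) := rfl

@[simp] lemma deCircuit_verts (w : Γ.Circuit) (i) :
    (deCircuit Γ α α' hne hpar w).verts i = w.verts i := rfl

lemma deCircuit_sign (hΓ : Γ.Loopless) (w : Γ.Circuit) (i : Fin w.len) :
    (deCircuit Γ α α' hne hpar w).sign r i
      = deT Γ r α α' (w.edges i) * w.sign r i := by
  by_cases hr : Even r
  · simp [Circuit.sign, hr, deT, deSgn]
  · have hends : (Γ.delete α).ends ((deCircuit Γ α α' hne hpar w).edges i)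
        = if w.edges i = α then Γ.ends α' else Γ.ends (w.edges i) :=
      ends_deRepl Γ α α' hne (w.edges i)
    unfold Circuit.sign
    rw [if_neg hr, if_neg hr, hends, deCircuit_verts, deCircuit_verts]
    by_cases h : w.edges i = α
    · rw [if_pos h]
      have hv : w.verts i.castSucc ≠ w.verts i.succ := by
        have hl := hΓ (w.edges i)
        rcases w.incid i with h2 | h2 <;> rw [h2] at hl
        · exact hl
        · exact fun he => hl he.symm
      have hinc : Γ.ends α = (w.verts i.castSucc, w.verts i.succ)
          ∨ Γ.ends α = (w.verts i.succ, w.verts i.castSucc) := by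
        rw [← h]; exact w.incid i
      have hα : (Γ.ends α).1 ≠ (Γ.ends α).2 := hΓ α
      have hT : deT Γ r α α' (w.edges i)
          = if Γ.ends α' = Γ.ends α then 1 else -1 := by
        rw [deT, if_pos h, deSgn, if_neg hr]
      rw [hT, h]
      rcases hpar with hp | hp
      · rw [if_pos hp, one_mul]
        simp only [hp]
        congr
      · have hnp : Γ.ends α' ≠ Γ.ends α := by
          rw [hp]
          intro hq
          exact hα (congrArg Prod.snd hq)
        rw [if_neg hnp]
        simp only [hp]
        rcases hinc with h2 | h2 <;> simp only [h2, Prod.swap_prod_mk]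
        · norm_num
          exact fun _ hq2 => hv hq2
        · rw [if_neg (show (w.verts i.succ, w.verts i.castSucc)
              ≠ (w.verts i.castSucc, w.verts i.succ) from
              fun hq => hv (congrArg Prod.snd hq))]
          norm_num
          exact ⟨rfl, rfl⟩
    · rw [if_neg h, deT, if_neg h, one_mul]
      congr

/-- a circuit of the deleted graph is a circuit of the original graph. -/
def emCircuit (u : (Γ.delete α).Circuit) : Γ.Circuit where
  len := u.len
  len_pos := u.len_pos
  edges := fun i => (u.edges i).1
  verts := u.verts
  closed := u.closed
  incid := u.incid

end

end MGraph

namespace MGraph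

variable {V : Type}

noncomputable section

open Classical

variable (Γ : MGraph V) (r : ℕ) (α α' : Γ.E) (hne : α ≠ α')
  (hpar : Γ.ends α' = Γ.ends α ∨ Γ.ends α' = (Γ.ends α).swap)

lemma dePhiLam_arnold (hΓ : Γ.Loopless) (w : Γ.Circuit) :
    dePhiLam Γ r α α' hne (w.arnold r)
      = ((List.finRange w.len).map fun j => deT Γ r α α' (w.edges j)).prod
          • ((deCircuit Γ α α' hne hpar w).arnold r) := by
  unfold Circuit.arnold
  rw [map_sum, Finset.smul_sum]
  refine Finset.sum_congr rfl fun i _ => ?_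
  rw [map_zsmul, map_list_prod, List.map_map]
  have hmap : ((List.finRange w.len).filter (fun j => j ≠ i)).map
        ((dePhiLam Γ r α α' hne) ∘ fun j => Γ.gen r (w.edges j))
      = ((List.finRange w.len).filter (fun j => j ≠ i)).map
        (fun j => deT Γ r α α' (w.edges j)
          • (Γ.delete α).gen r ((deCircuit Γ α α' hne hpar w).edges j)) := by
    refine List.map_congr_left fun j _ => ?_
    exact dePhiLam_gen Γ r α α' hne (w.edges j)
  rw [hmap, list_prod_smul, smul_smul, smul_smul,
    deCircuit_sign Γ r α α' hne hpar hΓ w i]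
  set C := (((List.finRange w.len).filter (fun j => j ≠ i)).map
    (fun j => deT Γ r α α' (w.edges j))).prod with hCdef
  set T := ((List.finRange w.len).map fun j => deT Γ r α α' (w.edges j)).prod with hTdef
  have hC : C * deT Γ r α α' (w.edges i) = T :=
    filt_prod_mul i (fun j => deT Γ r α α' (w.edges j))
  have htt := deT_mul_self Γ r α α' (w.edges i)
  have key : w.sign r i * C = T * (deT Γ r α α' (w.edges i) * w.sign r i) := by
    linear_combination (w.sign r i * deT Γ r α α' (w.edges i)) * hC
      - (w.sign r i * C) * htt
  exact congrArg (fun c : ℤ => c • (((List.finRange w.len).filter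
    (fun j => j ≠ i)).map (fun j => (Γ.delete α).gen r
    ((deCircuit Γ α α' hne hpar w).edges j))).prod) key

lemma dePsiLam_arnold (u : (Γ.delete α).Circuit) :
    dePsiLam Γ r α (u.arnold r) = (emCircuit Γ α u).arnold r := by
  unfold Circuit.arnold
  rw [map_sum]
  refine Finset.sum_congr rfl fun i _ => ?_
  rw [map_zsmul, map_list_prod, List.map_map]
  have h2 : ∀ l : List (Fin u.len),
      (l.map ((dePsiLam Γ r α) ∘ fun j => (Γ.delete α).gen r (u.edges j))).prod
        = (l.map (fun j => Γ.gen r ((emCircuit Γ α u).edges j))).prod := by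
    intro l
    refine congrArg List.prod (List.map_congr_left fun j _ => ?_)
    exact dePsiLam_gen Γ r α (u.edges j)
  exact congrArg (fun z => Circuit.sign r u i • z)
    (h2 ((List.finRange u.len).filter (fun j => j ≠ i)))

end

end MGraph

namespace MGraph

variable {V : Type}

noncomputable section

open Classical

variable (Γ : MGraph V) (r : ℕ) (α α' : Γ.E) (hne : α ≠ α')

lemma toR_arnold_eq_zero {Δ : MGraph V} (w : Δ.Circuit) :
    Δ.toR r (w.arnold r) = 0 := by
  have h := RingQuot.mkRingHom_rel (ArnRel.mk (Γ := Δ) (r := r) w)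
  exact h.trans (map_zero _)

lemma dePhiR_rel (hpar : Γ.ends α' = Γ.ends α ∨ Γ.ends α' = (Γ.ends α).swap) (hΓ : Γ.Loopless) : ∀ ⦃x y⦄, Γ.ArnRel r x y →
    (((Γ.delete α).toR r).comp (dePhiLam Γ r α α' hne)) x
      = (((Γ.delete α).toR r).comp (dePhiLam Γ r α α' hne)) y := by
  intro x y h
  induction h with
  | mk w =>
    rw [RingHom.comp_apply, RingHom.comp_apply, map_zero, map_zero,
      dePhiLam_arnold Γ r α α' hne hpar hΓ w, map_zsmul,
      toR_arnold_eq_zero, smul_zero]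

/-- the induced map `R(Γ) → R(Γ∖α)`. -/
def dePhiR (hpar : Γ.ends α' = Γ.ends α ∨ Γ.ends α' = (Γ.ends α).swap) (hΓ : Γ.Loopless) : Γ.R r →+* (Γ.delete α).R r :=
  RingQuot.lift ⟨((Γ.delete α).toR r).comp (dePhiLam Γ r α α' hne),
    dePhiR_rel Γ r α α' hne hpar hΓ⟩

lemma dePhiR_toR (hpar : Γ.ends α' = Γ.ends α ∨ Γ.ends α' = (Γ.ends α).swap) (hΓ : Γ.Loopless) (x : Γ.Lam r) :
    dePhiR Γ r α α' hne hpar hΓ (Γ.toR r x)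
      = (Γ.delete α).toR r (dePhiLam Γ r α α' hne x) := by
  exact RingQuot.lift_mkRingHom_apply _ (dePhiR_rel Γ r α α' hne hpar hΓ) x

lemma dePsiR_rel : ∀ ⦃x y⦄, (Γ.delete α).ArnRel r x y →
    ((Γ.toR r).comp (dePsiLam Γ r α)) x = ((Γ.toR r).comp (dePsiLam Γ r α)) y := by
  intro x y h
  induction h with
  | mk u =>
    rw [RingHom.comp_apply, RingHom.comp_apply, map_zero, map_zero,
      dePsiLam_arnold Γ r α u, toR_arnold_eq_zero]

/-- the induced map `R(Γ∖α) → R(Γ)`. -/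
def dePsiR : (Γ.delete α).R r →+* Γ.R r :=
  RingQuot.lift ⟨(Γ.toR r).comp (dePsiLam Γ r α), dePsiR_rel Γ r α⟩

lemma dePsiR_toR (x : (Γ.delete α).Lam r) :
    dePsiR Γ r α ((Γ.delete α).toR r x) = Γ.toR r (dePsiLam Γ r α x) := by
  exact RingQuot.lift_mkRingHom_apply _ (dePsiR_rel Γ r α) x

/-- the two-edge circuit formed by `α` and `α'`. -/
def deTwo (hpar : Γ.ends α' = Γ.ends α ∨ Γ.ends α' = (Γ.ends α).swap) : Γ.Circuit where
  len := 2
  len_pos := by norm_num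
  edges := fun i => if i.val = 0 then α else α'
  verts := fun i => if i.val = 1 then (Γ.ends α).2 else (Γ.ends α).1
  closed := rfl
  incid := by
    intro i
    fin_cases i
    · exact Or.inl rfl
    · rcases hpar with hp | hp
      · exact Or.inr (by simpa using hp)
      · exact Or.inl (by simpa [Prod.swap] using hp)

end

end MGraph

namespace MGraph

variable {V : Type}

noncomputable section

open Classical

variable (Γ : MGraph V) (r : ℕ) (α α' : Γ.E)
  (hpar : Γ.ends α' = Γ.ends α ∨ Γ.ends α' = (Γ.ends α).swap)

def deTwoIdx0 : Fin (deTwo Γ α α' hpar).len := ⟨0, by show (0:ℕ) < 2; norm_num⟩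

def deTwoIdx1 : Fin (deTwo Γ α α' hpar).len := ⟨1, by show (1:ℕ) < 2; norm_num⟩

lemma deTwo_arnold :
    (deTwo Γ α α' hpar).arnold r
      = (deTwo Γ α α' hpar).sign r (deTwoIdx0 Γ α α' hpar) • Γ.gen r α'
        + (deTwo Γ α α' hpar).sign r (deTwoIdx1 Γ α α' hpar) • Γ.gen r α := by
  unfold Circuit.arnold
  show (∑ i : Fin 2, (deTwo Γ α α' hpar).sign r i •
      (((List.finRange 2).filter (fun j => j ≠ i)).map
        (fun j => Γ.gen r ((deTwo Γ α α' hpar).edges j))).prod) = _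
  rw [Fin.sum_univ_two]
  have e0 : (List.finRange 2).filter (fun j => j ≠ (0 : Fin 2)) = [(1 : Fin 2)] := by decide
  have e1 : (List.finRange 2).filter (fun j => j ≠ (1 : Fin 2)) = [(0 : Fin 2)] := by decide
  rw [e0, e1]
  exact congrArg₂ (· + ·)
    (congrArg (fun x => (deTwo Γ α α' hpar).sign r (deTwoIdx0 Γ α α' hpar) • x)
      (List.prod_singleton : [Γ.gen r α'].prod = Γ.gen r α'))
    (congrArg (fun x => (deTwo Γ α α' hpar).sign r (deTwoIdx1 Γ α α' hpar) • x)
      (List.prod_singleton : [Γ.gen r α].prod = Γ.gen r α))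

lemma deTwo_sign0 : (deTwo Γ α α' hpar).sign r (deTwoIdx0 Γ α α' hpar) = 1 := by
  unfold Circuit.sign
  split_ifs with hr h
  · show ((-1 : ℤ) ^ (0 : ℕ)) = 1
    norm_num
  · rfl
  · exact absurd rfl h

lemma deTwo_sign1_even (hr : Even r) :
    (deTwo Γ α α' hpar).sign r (deTwoIdx1 Γ α α' hpar) = -1 := by
  unfold Circuit.sign
  rw [if_pos hr]
  show ((-1 : ℤ) ^ (1 : ℕ)) = -1
  norm_num

lemma deTwo_sign1_odd (hr : ¬ Even r) :
    (deTwo Γ α α' hpar).sign r (deTwoIdx1 Γ α α' hpar)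
      = if Γ.ends α' = (Γ.ends α).swap then 1 else -1 := by
  unfold Circuit.sign
  rw [if_neg hr]
  show (if Γ.ends α' = ((Γ.ends α).2, (Γ.ends α).1) then (1 : ℤ) else -1) = _
  rw [show (Γ.ends α).swap = ((Γ.ends α).2, (Γ.ends α).1) from rfl]

lemma toR_gen_alpha (hpar' : Γ.ends α' = Γ.ends α ∨ Γ.ends α' = (Γ.ends α).swap)
    (hΓ : Γ.Loopless) :
    Γ.toR r (Γ.gen r α) = deSgn Γ r α α' • Γ.toR r (Γ.gen r α') := by
  have h0 := toR_arnold_eq_zero (Δ := Γ) r (deTwo Γ α α' hpar')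
  rw [deTwo_arnold Γ r α α' hpar', map_add, map_zsmul, map_zsmul,
    deTwo_sign0 Γ r α α' hpar'] at h0
  by_cases hr : Even r
  · rw [deTwo_sign1_even Γ r α α' hpar' hr] at h0
    rw [deSgn, if_pos hr, one_smul]
    simp only [one_smul, neg_smul, ← sub_eq_add_neg] at h0
    exact (sub_eq_zero.mp h0).symm
  · rw [deTwo_sign1_odd Γ r α α' hpar' hr] at h0
    rw [deSgn, if_neg hr]
    rcases hpar' with hp | hp
    · have hns : Γ.ends α' ≠ (Γ.ends α).swap := by
        rw [hp]
        intro hq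
        exact hΓ α (congrArg Prod.fst hq)
      rw [if_neg hns] at h0
      rw [if_pos hp, one_smul]
      simp only [one_smul, neg_smul, ← sub_eq_add_neg] at h0
      exact (sub_eq_zero.mp h0).symm
    · have hne2 : Γ.ends α' ≠ Γ.ends α := by
        rw [hp]
        intro hq
        exact hΓ α (congrArg Prod.snd hq)
      rw [if_pos hp] at h0
      rw [if_neg hne2]
      simp only [one_smul] at h0
      rw [neg_smul, one_smul]
      exact eq_neg_of_add_eq_zero_right h0

end

end MGraph

namespace MGraph

lemma freeAlg_ringHom_ext {X : Type*} {A : Type*} [Ring A]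
    (f g : FreeAlgebra ℤ X →+* A)
    (h : ∀ x, f (FreeAlgebra.ι ℤ x) = g (FreeAlgebra.ι ℤ x)) : f = g := by
  have h2 : f.toIntAlgHom = g.toIntAlgHom := FreeAlgebra.hom_ext (funext h)
  ext x
  exact DFunLike.congr_fun (congrArg AlgHom.toRingHom h2) x

end MGraph


/-- If `α` and `α'` are two distinct edges of the loopless graph `Γ`
incident to the same pair of vertices, then `R^r(Γ) ≅ R^r(Γ∖α)`. -/
theorem double_edge_deletion_iso {V : Type} (Γ : MGraph V) (hΓ : Γ.Loopless)
    (r : ℕ) (α α' : Γ.E) (hne : α ≠ α')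
    (hpar : Γ.ends α' = Γ.ends α ∨ Γ.ends α' = (Γ.ends α).swap) :
    Nonempty (Γ.R r ≃+* (Γ.delete α).R r) := by
  classical
  refine ⟨RingEquiv.ofRingHom (MGraph.dePhiR Γ r α α' hne hpar hΓ) (MGraph.dePsiR Γ r α)
    ?_ ?_⟩
  swap
  · -- ψ ∘ φ = id on R(Γ)
    apply RingQuot.ringQuot_ext
    apply RingQuot.ringQuot_ext
    apply MGraph.freeAlg_ringHom_ext
    intro e
    show (MGraph.dePsiR Γ r α) ((MGraph.dePhiR Γ r α α' hne hpar hΓ)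
      (Γ.toR r (Γ.gen r e))) = Γ.toR r (Γ.gen r e)
    rw [MGraph.dePhiR_toR Γ r α α' hne hpar hΓ, MGraph.dePhiLam_gen Γ r α α' hne,
      map_zsmul, map_zsmul, MGraph.dePsiR_toR Γ r α, MGraph.dePsiLam_gen Γ r α]
    by_cases he : e = α
    · subst he
      rw [show MGraph.deRepl Γ e α' hne e = ⟨α', Ne.symm hne⟩ from dif_pos rfl,
        show MGraph.deT Γ r e α' e = MGraph.deSgn Γ r e α' from if_pos rfl]
      exact (MGraph.toR_gen_alpha Γ r e α' hpar hΓ).symm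
    · rw [show MGraph.deRepl Γ α α' hne e = ⟨e, he⟩ from dif_neg he,
        show MGraph.deT Γ r α α' e = 1 from if_neg he, one_smul]
  · -- φ ∘ ψ = id on R(Γ∖α)
    apply RingQuot.ringQuot_ext
    apply RingQuot.ringQuot_ext
    apply MGraph.freeAlg_ringHom_ext
    intro e
    show (MGraph.dePhiR Γ r α α' hne hpar hΓ) ((MGraph.dePsiR Γ r α)
      ((Γ.delete α).toR r ((Γ.delete α).gen r e)))
      = (Γ.delete α).toR r ((Γ.delete α).gen r e)
    rw [MGraph.dePsiR_toR Γ r α, MGraph.dePsiLam_gen Γ r α,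
      MGraph.dePhiR_toR Γ r α α' hne hpar hΓ, MGraph.dePhiLam_gen Γ r α α' hne]
    rw [show MGraph.deRepl Γ α α' hne e.1 = e from dif_neg e.2,
      show MGraph.deT Γ r α α' e.1 = 1 from if_neg e.2, one_smul]
end

section
/- For distinct edges α, β of a loopless graph Γ, the square relating deletion and contraction commutes: g_β ∘ i_α = (i_α ⊗ id) ∘ g_β as maps R^r(Γ∖α) → R^r(Γ/β) ⊗ e_β, where (Γ∖α)/β is identified with (Γ/β)∖α. -/
namespace MGraph

variable {V : Type}

/-- The graded-commutativity sign. -/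
noncomputable def csign (r : ℕ) : ℤ := (-1) ^ ((r - 1) * (r - 1))

lemma csign_mul_self (r : ℕ) : csign r * csign r = 1 := by
  unfold csign
  rw [← pow_add, ← two_mul, pow_mul]
  norm_num

lemma lam_comm (Δ : MGraph V) (r : ℕ) (a b : Δ.E) :
    Δ.gen r a * Δ.gen r b = csign r • (Δ.gen r b * Δ.gen r a) :=
  calc Δ.gen r a * Δ.gen r b
      = @id (Δ.Lam r) (RingQuot.mkRingHom (Δ.LamRel r) (FreeAlgebra.ι ℤ a * FreeAlgebra.ι ℤ b)) :=
        (map_mul _ _ _).symm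
    _ = @id (Δ.Lam r) (RingQuot.mkRingHom (Δ.LamRel r)
          (((-1 : ℤ) ^ ((r - 1) * (r - 1))) • (FreeAlgebra.ι ℤ b * FreeAlgebra.ι ℤ a))) :=
        RingQuot.mkRingHom_rel (LamRel.comm a b)
    _ = csign r • (Δ.gen r b * Δ.gen r a) := by
        rw [map_zsmul, map_mul]; rfl

lemma lam_sq (Δ : MGraph V) (r : ℕ) (b : Δ.E) : Δ.gen r b * Δ.gen r b = 0 :=
  calc Δ.gen r b * Δ.gen r b
      = @id (Δ.Lam r) (RingQuot.mkRingHom (Δ.LamRel r) (FreeAlgebra.ι ℤ b * FreeAlgebra.ι ℤ b)) :=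
        (map_mul _ _ _).symm
    _ = @id (Δ.Lam r) (RingQuot.mkRingHom (Δ.LamRel r) 0) := RingQuot.mkRingHom_rel (LamRel.sq b)
    _ = 0 := map_zero _

lemma genR_comm (Δ : MGraph V) (r : ℕ) (a b : Δ.E) :
    Δ.genR r a * Δ.genR r b = csign r • (Δ.genR r b * Δ.genR r a) := by
  have h := congrArg (Δ.toR r) (lam_comm Δ r a b)
  rw [map_mul, map_zsmul, map_mul] at h
  exact h

lemma genR_sq (Δ : MGraph V) (r : ℕ) (b : Δ.E) : Δ.genR r b * Δ.genR r b = 0 := by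
  have h := congrArg (Δ.toR r) (lam_sq Δ r b)
  rw [map_mul, map_zero] at h
  exact h

lemma prod_mul_genR (Δ : MGraph V) (r : ℕ) (b : Δ.E) (L : List Δ.E) :
    (L.map (Δ.genR r)).prod * Δ.genR r b =
      (csign r ^ L.length) • (Δ.genR r b * (L.map (Δ.genR r)).prod) := by
  induction L with
  | nil => simp
  | cons a M ih =>
    simp only [List.map_cons, List.prod_cons, List.length_cons]
    rw [mul_assoc, ih, mul_smul_comm, ← mul_assoc, genR_comm Δ r a b,
      smul_mul_assoc, smul_smul, mul_assoc, pow_succ,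
      mul_comm (csign r ^ M.length) (csign r)]

lemma genR_mul_prod (Δ : MGraph V) (r : ℕ) (b : Δ.E) (L : List Δ.E) :
    Δ.genR r b * (L.map (Δ.genR r)).prod =
      (csign r ^ L.length) • ((L.map (Δ.genR r)).prod * Δ.genR r b) := by
  rw [prod_mul_genR, smul_smul, ← mul_pow, csign_mul_self, one_pow, one_smul]

lemma prod_erase_genR (Δ : MGraph V) (r : ℕ) [DecidableEq Δ.E] (b : Δ.E) (L : List Δ.E)
    (hb : b ∈ L) :
    ∃ n : ℕ, (L.map (Δ.genR r)).prod =
      (csign r ^ n) • (((L.erase b).map (Δ.genR r)).prod * Δ.genR r b) := by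
  induction L with
  | nil => simp at hb
  | cons a M ih =>
    by_cases h : a = b
    · subst h
      refine ⟨M.length, ?_⟩
      rw [List.erase_cons_head]
      simp only [List.map_cons, List.prod_cons]
      exact genR_mul_prod Δ r a M
    · rw [List.mem_cons] at hb
      obtain ⟨n, hn⟩ := ih (hb.resolve_left (fun hh => h hh.symm))
      refine ⟨n, ?_⟩
      rw [List.erase_cons_tail (by simpa using h)]
      simp only [List.map_cons, List.prod_cons, hn, mul_smul_comm, mul_assoc]

lemma span_monomials (X : Type) :
    Submodule.span ℤ {x : FreeAlgebra ℤ X | ∃ L : List X, x = (L.map (FreeAlgebra.ι ℤ)).prod}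
      = ⊤ := by
  set S := {x : FreeAlgebra ℤ X | ∃ L : List X, x = (L.map (FreeAlgebra.ι ℤ)).prod} with hS
  rw [eq_top_iff]
  rintro x -
  induction x using FreeAlgebra.induction with
  | grade0 n =>
    have h1 : (1 : FreeAlgebra ℤ X) ∈ S := ⟨[], by simp⟩
    have h2 : algebraMap ℤ (FreeAlgebra ℤ X) n = n • (1 : FreeAlgebra ℤ X) := by
      simp [zsmul_eq_mul]
    rw [h2]
    exact Submodule.smul_mem _ _ (Submodule.subset_span h1)
  | grade1 a => exact Submodule.subset_span ⟨[a], by simp⟩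
  | mul a b ha hb =>
    have h := Submodule.mul_mem_mul ha hb
    open Pointwise in replace h : a * b ∈ Submodule.span ℤ (S * S) := (by erw [← Submodule.span_mul_span]; exact Submodule.mul_mem_mul ha hb)
    refine Submodule.span_le.2 ?_ h
    rintro z hz
    rw [Set.mem_mul] at hz
    obtain ⟨u, ⟨L1, rfl⟩, v, ⟨L2, rfl⟩, rfl⟩ := hz
    exact Submodule.subset_span ⟨L1 ++ L2, by rw [List.map_append, List.prod_append]⟩
  | add a b ha hb => exact Submodule.add_mem _ ha hb

end MGraph

/-- For distinct edges `α, β` of a loopless graph `Γ`, deletion and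
contraction commute: `g_β ∘ i_α = (i_α ⊗ id) ∘ g'_β` as maps
`R^r(Γ∖α) → R^r(Γ/β) ⊗ e_β ≅ R^r(Γ/β)`, where `(Γ∖α)/β` is identified with
`(Γ/β)∖α` and `i_α ⊗ id` is the map `j` induced by this inclusion. All maps are
characterised by their values on generators, the component maps `g_β, g'_β` by the
defining properties `g(i(x)) = 0`, `g(i(x)·e_β) = p(x)`. -/
theorem deletion_contraction_commute {V : Type} [DecidableEq V]
    (Γ : MGraph V) (hΓ : Γ.Loopless) (r : ℕ) (α β : Γ.E) (hαβ : β ≠ α)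
    -- the deletion map `i_α : R^r(Γ∖α) → R^r(Γ)`
    (iα : (Γ.delete α).R r →+* Γ.R r)
    (hiα : ∀ e : (Γ.delete α).E, iα ((Γ.delete α).genR r e) = Γ.genR r e.1)
    -- the component map `g_β : R^r(Γ) → R^r(Γ/β)`
    (iβ : (Γ.delete β).R r →+* Γ.R r)
    (hiβ : ∀ e : (Γ.delete β).E, iβ ((Γ.delete β).genR r e) = Γ.genR r e.1)
    (pβ : (Γ.delete β).R r →+* (Γ.contract β).R r)
    (hpβ : ∀ e : (Γ.delete β).E, pβ ((Γ.delete β).genR r e) = (Γ.contract β).genR r e)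
    (g : Γ.R r →+ (Γ.contract β).R r)
    (hg0 : ∀ y, g (iβ y) = 0) (hg1 : ∀ y, g (iβ y * Γ.genR r β) = pβ y)
    -- the component map `g'_β : R^r(Γ∖α) → R^r((Γ∖α)/β)` for the edge `β` of `Γ∖α`
    (i' : ((Γ.delete α).delete ⟨β, hαβ⟩).R r →+* (Γ.delete α).R r)
    (hi' : ∀ e, i' (((Γ.delete α).delete ⟨β, hαβ⟩).genR r e) = (Γ.delete α).genR r e.1)
    (p' : ((Γ.delete α).delete ⟨β, hαβ⟩).R r →+* ((Γ.delete α).contract ⟨β, hαβ⟩).R r)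
    (hp' : ∀ e, p' (((Γ.delete α).delete ⟨β, hαβ⟩).genR r e) =
      ((Γ.delete α).contract ⟨β, hαβ⟩).genR r e)
    (g' : (Γ.delete α).R r →+ ((Γ.delete α).contract ⟨β, hαβ⟩).R r)
    (hg0' : ∀ y, g' (i' y) = 0)
    (hg1' : ∀ y, g' (i' y * (Γ.delete α).genR r ⟨β, hαβ⟩) = p' y)
    -- the map `j = i_α ⊗ id : R^r((Γ∖α)/β) → R^r(Γ/β)` identifying `(Γ∖α)/β` with `(Γ/β)∖α`
    (j : ((Γ.delete α).contract ⟨β, hαβ⟩).R r →+* (Γ.contract β).R r)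
    (hj : ∀ (e : Γ.E) (h1 : e ≠ α) (h2 : (⟨e, h1⟩ : (Γ.delete α).E) ≠ ⟨β, hαβ⟩),
      j (((Γ.delete α).contract ⟨β, hαβ⟩).genR r ⟨⟨e, h1⟩, h2⟩) =
        (Γ.contract β).genR r ⟨e, fun he => h2 (Subtype.ext he)⟩) :
    ∀ x : (Γ.delete α).R r, g (iα x) = j (g' x) := by
  classical
  intro x
  -- the canonical surjection from the free algebra
  set π : FreeAlgebra ℤ (Γ.delete α).E →+* (Γ.delete α).R r :=
    ((Γ.delete α).toR r).comp (RingQuot.mkRingHom ((Γ.delete α).LamRel r)) with hπ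
  have hπs : Function.Surjective π := by
    have h1 := RingQuot.mkRingHom_surjective ((Γ.delete α).ArnRel r)
    have h2 := RingQuot.mkRingHom_surjective ((Γ.delete α).LamRel r)
    exact h1.comp h2
  obtain ⟨y, rfl⟩ := hπs x
  have hy : y ∈ Submodule.span ℤ
      {x : FreeAlgebra ℤ (Γ.delete α).E | ∃ L : List (Γ.delete α).E,
        x = (L.map (FreeAlgebra.ι ℤ)).prod} := by
    rw [MGraph.span_monomials]; trivial
  refine Submodule.span_induction
    (p := fun y _ => g (iα (π y)) = j (g' (π y))) ?_ ?_ ?_ ?_ hy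
  · -- monomials
    rintro _ ⟨L, rfl⟩
    have hπL : π ((L.map (FreeAlgebra.ι ℤ)).prod) = (L.map ((Γ.delete α).genR r)).prod := by
      rw [map_list_prod, List.map_map]
      rfl
    rw [hπL]
    -- lifting lemmas for lists of edges of (Γ∖α)∖β
    have keyi' : ∀ K : List ((Γ.delete α).delete ⟨β, hαβ⟩).E,
        i' ((K.map (((Γ.delete α).delete ⟨β, hαβ⟩).genR r)).prod)
          = (K.map (fun e => (Γ.delete α).genR r e.1)).prod := by
      intro K
      rw [map_list_prod, List.map_map]
      exact congrArg List.prod (List.map_congr_left (fun e _ => hi' e))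
    have keyiα : ∀ K : List ((Γ.delete α).delete ⟨β, hαβ⟩).E,
        iα ((K.map (fun e => (Γ.delete α).genR r e.1)).prod)
          = iβ ((K.map (fun e =>
              (Γ.delete β).genR r ⟨e.1.1, fun h => e.2 (Subtype.ext h)⟩)).prod) := by
      intro K
      rw [map_list_prod, map_list_prod, List.map_map, List.map_map]
      refine congrArg List.prod (List.map_congr_left (fun e _ => ?_))
      show iα ((Γ.delete α).genR r e.1) = iβ ((Γ.delete β).genR r ⟨e.1.1, _⟩)
      erw [hiα, hiβ]
    have keyj : ∀ K : List ((Γ.delete α).delete ⟨β, hαβ⟩).E,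
        pβ ((K.map (fun e =>
            (Γ.delete β).genR r ⟨e.1.1, fun h => e.2 (Subtype.ext h)⟩)).prod)
          = j (p' ((K.map (((Γ.delete α).delete ⟨β, hαβ⟩).genR r)).prod)) := by
      intro K
      rw [map_list_prod, map_list_prod, map_list_prod, List.map_map, List.map_map,
        List.map_map]
      refine congrArg List.prod (List.map_congr_left (fun e _ => ?_))
      show pβ ((Γ.delete β).genR r ⟨e.1.1, _⟩)
        = j (p' (((Γ.delete α).delete ⟨β, hαβ⟩).genR r e))
      erw [hpβ, hp']
      exact (hj e.1.1 e.1.2 e.2).symm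
    by_cases hbL : (⟨β, hαβ⟩ : (Γ.delete α).E) ∈ L
    · by_cases hb2 : (⟨β, hαβ⟩ : (Γ.delete α).E) ∈ L.erase ⟨β, hαβ⟩
      · -- β occurs at least twice: the monomial vanishes
        obtain ⟨n, hn⟩ := MGraph.prod_erase_genR (Γ.delete α) r ⟨β, hαβ⟩ L hbL
        obtain ⟨m, hm⟩ :=
          MGraph.prod_erase_genR (Γ.delete α) r ⟨β, hαβ⟩ (L.erase ⟨β, hαβ⟩) hb2
        have hz : (L.map ((Γ.delete α).genR r)).prod = 0 := by
          rw [hn, hm, smul_mul_assoc, mul_assoc]; erw [MGraph.genR_sq]; rw [mul_zero, smul_zero,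
            smul_zero]
        rw [hz, map_zero, map_zero, map_zero, map_zero]
      · -- β occurs exactly once
        obtain ⟨n, hn⟩ := MGraph.prod_erase_genR (Γ.delete α) r ⟨β, hαβ⟩ L hbL
        have hM : ∀ e ∈ L.erase (⟨β, hαβ⟩ : (Γ.delete α).E), e ≠ ⟨β, hαβ⟩ :=
          fun e he hh => hb2 (hh ▸ he)
        set K : List ((Γ.delete α).delete ⟨β, hαβ⟩).E :=
          (L.erase ⟨β, hαβ⟩).attach.map (fun x => ⟨x.1, hM x.1 x.2⟩) with hK
        have hKM : K.map (fun e => e.1) = L.erase ⟨β, hαβ⟩ := by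
          rw [hK]; erw [List.map_map]
          exact List.attach_map_subtype_val (L.erase ⟨β, hαβ⟩)
        have hMK : ((L.erase (⟨β, hαβ⟩ : (Γ.delete α).E)).map ((Γ.delete α).genR r)).prod
            = (K.map (fun e => (Γ.delete α).genR r e.1)).prod := by
          rw [← hKM, List.map_map]
          rfl
        rw [hn, map_zsmul, map_zsmul, map_zsmul, map_zsmul, map_mul, hMK, keyiα,
          ← keyi']; erw [hiα]
        rw [show ((⟨β, hαβ⟩ : (Γ.delete α).E).1) = β from rfl, hg1, hg1', keyj]
    · -- β does not occur: both sides vanish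
      have hM : ∀ e ∈ L, e ≠ (⟨β, hαβ⟩ : (Γ.delete α).E) := fun e he hh => hbL (hh ▸ he)
      set K : List ((Γ.delete α).delete ⟨β, hαβ⟩).E :=
        L.attach.map (fun x => ⟨x.1, hM x.1 x.2⟩) with hK
      have hKM : K.map (fun e => e.1) = L := by
        rw [hK]; erw [List.map_map]
        exact List.attach_map_subtype_val L
      have hMK : (L.map ((Γ.delete α).genR r)).prod
          = (K.map (fun e => (Γ.delete α).genR r e.1)).prod := by
        rw [← hKM, List.map_map]
        rfl
      rw [hMK, keyiα, ← keyi', hg0, hg0', map_zero]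
  · simp
  · intro u v _ _ hu hv
    simp only [map_add, hu, hv]
  · intro a u _ hu
    simp only [map_zsmul, hu]
end
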